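/- arXiv:1207.6053 — 4 statements merged into one kernel-verified Lean document; each statement's English description precedes it below -/
import Mathlib

section
/- Every positive semidefinite Toeplitz matrix P ∈ ℂ^{n×n} of rank r can be written as P = V D V*, where V is the n×r Vandermonde matrix with columns a(f_k) = (e^{i2πf_k·0}, ..., e^{i2πf_k(n-1)})ᵀ for distinct frequencies f_1,...,f_r ∈ [0,1), and D = diag(d_1,...,d_r) with each d_k > 0. -/
open Complex Matrix
open scoped ComplexOrder

/-- The atom `a(f)` with entries `e^{i2πfj}`, `j = 0, ..., n-1`. -/
noncomputable def atomVec (n : ℕ) (f : ℝ) : Fin n → ℂ :=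
  fun j => Complex.exp (Complex.I * (2 * Real.pi * f * j))


open Finset Module
open scoped InnerProductSpace

local notation "⟪" x ", " y "⟫" => @inner ℂ _ _ x y

/-- Spectral decomposition for an inner-product-preserving endomorphism of a
finite-dimensional complex inner product space. -/
lemma unitary_spectral (m : ℕ) :
    ∀ (V : Type) [NormedAddCommGroup V] [InnerProductSpace ℂ V] [FiniteDimensional ℂ V]
      (_ : Module.finrank ℂ V = m) (U : V →ₗ[ℂ] V)
      (_ : ∀ x y : V, ⟪U x, U y⟫ = ⟪x, y⟫),
    ∃ (lam : Fin m → ℂ) (v : Fin m → V),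
      Orthonormal ℂ v ∧ (∀ l, ‖lam l‖ = 1) ∧ (∀ l, U (v l) = lam l • v l) ∧
      (∀ x : V, x = ∑ l, ⟪v l, x⟫ • v l) := by
  induction m with
  | zero =>
    intro V _ _ _ hrk U hU
    have : Subsingleton V := Module.finrank_zero_iff.mp hrk
    refine ⟨Fin.elim0, Fin.elim0, ?_, fun i => i.elim0, fun i => i.elim0,
      fun x => Subsingleton.elim _ _⟩
    rw [orthonormal_iff_ite]; exact fun i => i.elim0
  | succ m ih =>
    intro V _ _ _ hrk U hU
    have : Nontrivial V := Module.nontrivial_of_finrank_pos (by omega : 0 < Module.finrank ℂ V)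
    obtain ⟨lam0, hlam0⟩ := Module.End.exists_eigenvalue (U : Module.End ℂ V)
    obtain ⟨v0', hv0'⟩ := hlam0.exists_hasEigenvector
    have hv0'ne : v0' ≠ 0 := hv0'.right
    set v0 : V := ‖v0'‖⁻¹ • v0' with hv0def
    have hv0norm : ‖v0‖ = 1 := norm_smul_inv_norm hv0'ne
    have hv0ne : v0 ≠ 0 := by
      intro h; rw [h] at hv0norm; simp at hv0norm
    have hv0self : ⟪v0, v0⟫ = 1 := by
      rw [inner_self_eq_norm_sq_to_K, hv0norm]; norm_num
    have hUv0 : U v0 = lam0 • v0 := by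
      rw [hv0def, LinearMap.map_smul_of_tower, hv0'.apply_eq_smul, smul_comm]
    have hlamnorm : ‖lam0‖ = 1 := by
      have h1 : ⟪U v0, U v0⟫ = ⟪v0, v0⟫ := hU v0 v0
      rw [hUv0, inner_smul_left, inner_smul_right, hv0self] at h1
      have h2 : ((Complex.normSq lam0 : ℝ) : ℂ) = 1 := by
        rw [← Complex.mul_conj]; rw [mul_one] at h1; rw [← h1]; ring
      have h3 : Complex.normSq lam0 = 1 := by exact_mod_cast h2
      have : ‖lam0‖ ^ 2 = 1 := by
        rw [Complex.sq_norm, h3]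
      nlinarith [norm_nonneg lam0]
    have hlam0ne : lam0 ≠ 0 := by
      intro h; rw [h] at hlamnorm; simp at hlamnorm
    set K : Submodule ℂ V := (ℂ ∙ v0)ᗮ with hKdef
    have hv0K : ∀ x : V, x ∈ K → ⟪v0, x⟫ = 0 := by
      intro x hx
      exact hx v0 (Submodule.mem_span_singleton_self v0)
    have hUK : ∀ x ∈ K, U x ∈ K := by
      intro x hx u hu
      obtain ⟨a, rfl⟩ := Submodule.mem_span_singleton.mp hu
      have h0 : ⟪v0, U x⟫ = 0 := by
        have h1 : ⟪U v0, U x⟫ = ⟪v0, x⟫ := hU v0 x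
        rw [hUv0, inner_smul_left, hv0K x hx] at h1
        rcases mul_eq_zero.mp h1 with h | h
        · exact absurd h (by simpa using hlam0ne)
        · exact h
      rw [inner_smul_left, h0, mul_zero]
    set U' : K →ₗ[ℂ] K := U.restrict hUK with hU'def
    have hrkK : Module.finrank ℂ K = m := by
      have h1 := Submodule.finrank_add_finrank_orthogonal (𝕜 := ℂ) (ℂ ∙ v0)
      rw [finrank_span_singleton hv0ne, ← hKdef] at h1
      omega
    have hU'inner : ∀ x y : K, ⟪U' x, U' y⟫ = ⟪x, y⟫ := fun x y => hU x y
    obtain ⟨lam, v, hon, hnorm, heig, hexp⟩ := ih K hrkK U' hU'inner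
    have honV : ∀ i j : Fin m, ⟪(v i : V), (v j : V)⟫ = if i = j then 1 else 0 :=
      fun i j => orthonormal_iff_ite.mp hon i j
    refine ⟨Fin.cons lam0 lam, Fin.cons v0 (fun l => (v l : V)), ?_, ?_, ?_, ?_⟩
    · rw [orthonormal_iff_ite]
      intro i j
      rcases Fin.eq_zero_or_eq_succ i with rfl | ⟨i', rfl⟩ <;>
        rcases Fin.eq_zero_or_eq_succ j with rfl | ⟨j', rfl⟩
      · simpa using hv0self
      · have : ⟪v0, (v j' : V)⟫ = 0 := hv0K _ (v j').2
        simpa [(Fin.succ_ne_zero j').symm] using this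
      · have : ⟪(v i' : V), v0⟫ = 0 := by
          rw [← inner_conj_symm, hv0K _ (v i').2, map_zero]
        simpa [Fin.succ_ne_zero i'] using this
      · simpa [Fin.succ_inj] using honV i' j'
    · intro l
      rcases Fin.eq_zero_or_eq_succ l with rfl | ⟨i, rfl⟩
      · simpa using hlamnorm
      · simpa using hnorm i
    · intro l
      rcases Fin.eq_zero_or_eq_succ l with rfl | ⟨i, rfl⟩
      · simpa using hUv0
      · have h1 : U (v i : V) = (U' (v i) : V) := rfl
        simp only [Fin.cons_succ, h1, heig i, Submodule.coe_smul]
    · intro x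
      have hy : x - ⟪v0, x⟫ • v0 ∈ K := by
        intro u hu
        obtain ⟨a, rfl⟩ := Submodule.mem_span_singleton.mp hu
        have h0 : ⟪v0, x - ⟪v0, x⟫ • v0⟫ = 0 := by
          rw [inner_sub_right, inner_smul_right, hv0self, mul_one, sub_self]
        rw [inner_smul_left, h0, mul_zero]
      have hexpy := congrArg (Submodule.subtype K) (hexp ⟨x - ⟪v0, x⟫ • v0, hy⟩)
      simp only [Submodule.coe_subtype, map_sum] at hexpy
      have hcoe : (x - ⟪v0, x⟫ • v0) = ∑ l, ⟪(v l : V), x⟫ • (v l : V) := by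
        rw [hexpy]
        refine Finset.sum_congr rfl fun l _ => ?_
        rw [Submodule.coe_smul]
        have h2 : ⟪(v l : V), v0⟫ = 0 := by
          rw [← inner_conj_symm, hv0K _ (v l).2, map_zero]
        have hK : (⟪v l, (⟨x - ⟪v0, x⟫ • v0, hy⟩ : K)⟫ : ℂ)
            = ⟪(v l : V), x - ⟪v0, x⟫ • v0⟫ := rfl
        rw [hK, inner_sub_right, inner_smul_right, h2, mul_zero, sub_zero]
      rw [Fin.sum_univ_succ]
      simp only [Fin.cons_zero, Fin.cons_succ]
      rw [← hcoe]
      abel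

lemma inner_sum_sum {ι : Type*} [Fintype ι] {V : Type*} [NormedAddCommGroup V]
    [InnerProductSpace ℂ V] (a b : ι → ℂ) (x y : ι → V) :
    ⟪∑ i, a i • x i, ∑ j, b j • y j⟫
      = ∑ i, ∑ j, (starRingEnd ℂ) (a i) * b j * ⟪x i, y j⟫ := by
  rw [sum_inner]
  refine Finset.sum_congr rfl fun i _ => ?_
  rw [inner_sum]
  refine Finset.sum_congr rfl fun j _ => ?_
  rw [inner_smul_left, inner_smul_right]
  ring


set_option maxHeartbeats 1000000 in
/-- Core decomposition for a finite sequence of vectors whose Gram matrix is Toeplitz-like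
under the shift. -/
lemma span_decomp (m r : ℕ) (E : Type) [NormedAddCommGroup E] [InnerProductSpace ℂ E]
    [FiniteDimensional ℂ E] (w : Fin (m + 1) → E)
    (hshift : ∀ j k : Fin m, ⟪w j.castSucc, w k.castSucc⟫ = ⟪w j.succ, w k.succ⟫)
    (hr : Module.finrank ℂ (Submodule.span ℂ (Set.range w)) = r) :
    ∃ (μ : Fin r → ℂ) (d : Fin r → ℝ),
      (∀ l, ‖μ l‖ = 1) ∧ (∀ l, 0 ≤ d l) ∧
      ∀ j k : Fin (m + 1),
        ⟪w j, w k⟫ = ∑ l, (d l : ℂ) * μ l ^ (j : ℕ) * (starRingEnd ℂ) (μ l) ^ (k : ℕ) := by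
  classical
  set W : Submodule ℂ E := Submodule.span ℂ (Set.range w) with hWdef
  have hwWmem : ∀ j, w j ∈ W := fun j => Submodule.subset_span ⟨j, rfl⟩
  set wW : Fin (m + 1) → W := fun j => ⟨w j, hwWmem j⟩ with hwWdef
  have hinnerW : ∀ j k : Fin (m + 1), ⟪wW j, wW k⟫ = ⟪w j, w k⟫ := fun j k => rfl
  have hshiftW : ∀ j k : Fin m, ⟪wW j.castSucc, wW k.castSucc⟫ = ⟪wW j.succ, wW k.succ⟫ :=
    fun j k => hshift j k
  set T1 : (Fin m → ℂ) →ₗ[ℂ] W :=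
    { toFun := fun c => ∑ j, c j • wW j.castSucc
      map_add' := by
        intro c c'; simp only [Pi.add_apply, add_smul]; rw [Finset.sum_add_distrib]
      map_smul' := by
        intro a c; simp only [Pi.smul_apply, smul_eq_mul, RingHom.id_apply, ← smul_smul]
        rw [← Finset.smul_sum] } with hT1def
  set T2 : (Fin m → ℂ) →ₗ[ℂ] W :=
    { toFun := fun c => ∑ j, c j • wW j.succ
      map_add' := by
        intro c c'; simp only [Pi.add_apply, add_smul]; rw [Finset.sum_add_distrib]
      map_smul' := by
        intro a c; simp only [Pi.smul_apply, smul_eq_mul, RingHom.id_apply, ← smul_smul]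
        rw [← Finset.smul_sum] } with hT2def
  have hT1app : ∀ c, T1 c = ∑ j, c j • wW j.castSucc := fun c => rfl
  have hT2app : ∀ c, T2 c = ∑ j, c j • wW j.succ := fun c => rfl
  have keyinner : ∀ c c' : Fin m → ℂ, ⟪T1 c, T1 c'⟫ = ⟪T2 c, T2 c'⟫ := by
    intro c c'
    rw [hT1app, hT1app, hT2app, hT2app, inner_sum_sum, inner_sum_sum]
    refine Finset.sum_congr rfl fun j _ => Finset.sum_congr rfl fun k _ => ?_
    congr 1
    exact hshiftW j k
  have hker12 : ∀ c : Fin m → ℂ, T1 c = 0 → T2 c = 0 := by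
    intro c h
    have h2 : ⟪T2 c, T2 c⟫ = 0 := by rw [← keyinner, h, inner_zero_left]
    exact inner_self_eq_zero.mp h2
  have hker21 : ∀ c : Fin m → ℂ, T2 c = 0 → T1 c = 0 := by
    intro c h
    have h2 : ⟪T1 c, T1 c⟫ = 0 := by rw [keyinner, h, inner_zero_left]
    exact inner_self_eq_zero.mp h2
  have hkereq : LinearMap.ker T1 = LinearMap.ker T2 := by
    ext c
    exact ⟨fun h => hker12 c h, fun h => hker21 c h⟩
  set M : Submodule ℂ W := LinearMap.range T1 with hMdef
  set N : Submodule ℂ W := LinearMap.range T2 with hNdef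
  set φ : M →ₗ[ℂ] W :=
    (Submodule.liftQ (LinearMap.ker T1) T2 (le_of_eq hkereq)).comp
      (T1.quotKerEquivRange).symm.toLinearMap with hφdef
  have hφ : ∀ (z : M) (c : Fin m → ℂ), (z : W) = T1 c → φ z = T2 c := by
    intro z c hz
    have hz' : z = ⟨T1 c, ⟨c, rfl⟩⟩ := Subtype.ext hz
    subst hz'
    have h1 : T1.quotKerEquivRange (Submodule.Quotient.mk c) = ⟨T1 c, ⟨c, rfl⟩⟩ :=
      Subtype.ext (T1.quotKerEquivRange_apply_mk c)
    rw [hφdef, LinearMap.comp_apply, LinearEquiv.coe_toLinearMap, ← h1,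
      LinearEquiv.symm_apply_apply, Submodule.liftQ_apply]
  have hφmem : ∀ z : M, φ z ∈ N := by
    intro z
    obtain ⟨c, hc⟩ := z.2
    rw [hφ z c hc.symm]
    exact ⟨c, rfl⟩
  have hφinner : ∀ z z' : M, ⟪φ z, φ z'⟫ = ⟪(z : W), (z' : W)⟫ := by
    intro z z'
    obtain ⟨c, hc⟩ := z.2
    obtain ⟨c', hc'⟩ := z'.2
    rw [hφ z c hc.symm, hφ z' c' hc'.symm, ← keyinner, ← hc, ← hc']
  have hMN : Module.finrank ℂ M = Module.finrank ℂ N := by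
    rw [hMdef, hNdef]
    rw [← LinearEquiv.finrank_eq T1.quotKerEquivRange,
      ← LinearEquiv.finrank_eq T2.quotKerEquivRange, hkereq]
  have hdimbot : Module.finrank ℂ (Nᗮ) = Module.finrank ℂ (Mᗮ) := by
    have h1 := Submodule.finrank_add_finrank_orthogonal (𝕜 := ℂ) M
    have h2 := Submodule.finrank_add_finrank_orthogonal (𝕜 := ℂ) N
    omega
  set ψ : (Mᗮ : Submodule ℂ W) ≃ₗᵢ[ℂ] (Nᗮ : Submodule ℂ W) :=
    (stdOrthonormalBasis ℂ (Mᗮ : Submodule ℂ W)).repr.trans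
      (((stdOrthonormalBasis ℂ (Nᗮ : Submodule ℂ W)).reindex
        (finCongr hdimbot)).repr).symm with hψdef
  set U : W →ₗ[ℂ] W :=
    φ.comp (Submodule.orthogonalProjection M).toLinearMap +
      (Nᗮ).subtype.comp (ψ.toLinearMap.comp (Submodule.orthogonalProjection (Mᗮ)).toLinearMap)
    with hUdef
  have hUapp : ∀ x : W, U x = φ (Submodule.orthogonalProjection M x) +
      ((ψ (Submodule.orthogonalProjection (Mᗮ) x) : (Nᗮ : Submodule ℂ W)) : W) := fun x => rfl
  have hU : ∀ x y : W, ⟪U x, U y⟫ = ⟪x, y⟫ := by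
    intro x y
    rw [hUapp, hUapp, inner_add_left, inner_add_right, inner_add_right]
    have hcross1 : ⟪φ (Submodule.orthogonalProjection M x),
        ((ψ (Submodule.orthogonalProjection (Mᗮ) y) : (Nᗮ : Submodule ℂ W)) : W)⟫ = 0 :=
      (ψ (Submodule.orthogonalProjection (Mᗮ) y)).2 _ (hφmem _)
    have hcross2 : ⟪((ψ (Submodule.orthogonalProjection (Mᗮ) x) : (Nᗮ : Submodule ℂ W)) : W),
        φ (Submodule.orthogonalProjection M y)⟫ = 0 := by
      rw [← inner_conj_symm]
      rw [(ψ (Submodule.orthogonalProjection (Mᗮ) x)).2 _ (hφmem _), map_zero]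
    rw [hcross1, hcross2, add_zero, zero_add, hφinner]
    have hpsi : ⟪((ψ (Submodule.orthogonalProjection (Mᗮ) x) : (Nᗮ : Submodule ℂ W)) : W),
        ((ψ (Submodule.orthogonalProjection (Mᗮ) y) : (Nᗮ : Submodule ℂ W)) : W)⟫
        = ⟪((Submodule.orthogonalProjection (Mᗮ) x : (Mᗮ : Submodule ℂ W)) : W),
            ((Submodule.orthogonalProjection (Mᗮ) y : (Mᗮ : Submodule ℂ W)) : W)⟫ :=
      ψ.inner_map_map _ _
    rw [hpsi]
    have hx : ((Submodule.orthogonalProjection M x : M) : W)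
        + ((Submodule.orthogonalProjection (Mᗮ) x : (Mᗮ : Submodule ℂ W)) : W) = x := by
      have h := M.starProjection_add_starProjection_orthogonal x
      rw [Submodule.starProjection_apply, Submodule.starProjection_apply] at h
      exact h
    have hy : ((Submodule.orthogonalProjection M y : M) : W)
        + ((Submodule.orthogonalProjection (Mᗮ) y : (Mᗮ : Submodule ℂ W)) : W) = y := by
      have h := M.starProjection_add_starProjection_orthogonal y
      rw [Submodule.starProjection_apply, Submodule.starProjection_apply] at h
      exact h
    conv_rhs => rw [← hx, ← hy]
    rw [inner_add_left, inner_add_right, inner_add_right]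
    have hc1 : ⟪((Submodule.orthogonalProjection M x : M) : W),
        ((Submodule.orthogonalProjection (Mᗮ) y : (Mᗮ : Submodule ℂ W)) : W)⟫ = 0 :=
      (Submodule.orthogonalProjection (Mᗮ) y).2 _ (Submodule.orthogonalProjection M x).2
    have hc2 : ⟪((Submodule.orthogonalProjection (Mᗮ) x : (Mᗮ : Submodule ℂ W)) : W),
        ((Submodule.orthogonalProjection M y : M) : W)⟫ = 0 := by
      rw [← inner_conj_symm, (Submodule.orthogonalProjection (Mᗮ) x).2 _ (Submodule.orthogonalProjection M y).2,
        map_zero]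
    rw [hc1, hc2, add_zero, zero_add]
  have hUw : ∀ j : Fin m, U (wW j.castSucc) = wW j.succ := by
    intro j
    have hsingle1 : T1 (Pi.single j 1) = wW j.castSucc := by
      rw [hT1app, Finset.sum_eq_single j]
      · rw [Pi.single_eq_same, one_smul]
      · intro k _ hk
        rw [Pi.single_eq_of_ne hk, zero_smul]
      · intro h; exact absurd (Finset.mem_univ j) h
    have hsingle2 : T2 (Pi.single j 1) = wW j.succ := by
      rw [hT2app, Finset.sum_eq_single j]
      · rw [Pi.single_eq_same, one_smul]
      · intro k _ hk
        rw [Pi.single_eq_of_ne hk, zero_smul]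
      · intro h; exact absurd (Finset.mem_univ j) h
    have hmem : wW j.castSucc ∈ M := ⟨Pi.single j 1, hsingle1⟩
    have hproj1 : Submodule.orthogonalProjection M (wW j.castSucc) = ⟨wW j.castSucc, hmem⟩ :=
      Submodule.orthogonalProjection_mem_subspace_eq_self (⟨wW j.castSucc, hmem⟩ : M)
    have hproj2 : Submodule.orthogonalProjection (Mᗮ) (wW j.castSucc) = 0 :=
      Submodule.orthogonalProjectionOnto_apply_of_mem_orthogonal (M.le_orthogonal_orthogonal hmem)
    rw [hUapp, hproj1, hproj2, map_zero]
    simp only [Submodule.coe_zero, add_zero]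
    rw [hφ _ (Pi.single j 1) hsingle1.symm, hsingle2]
  have hrkW : Module.finrank ℂ W = r := hr
  obtain ⟨lam, v, hon, hlam1, heig, hexp⟩ := unitary_spectral r W hrkW U hU
  set x0 : W := wW ⟨0, by omega⟩ with hx0def
  set c : Fin r → ℂ := fun l => ⟪v l, x0⟫ with hcdef
  have hx0 : x0 = ∑ l, c l • v l := hexp x0
  have hUpowv : ∀ (i : ℕ) (l : Fin r), (U ^ i) (v l) = lam l ^ i • v l := by
    intro i l
    induction i with
    | zero => rw [pow_zero, pow_zero, one_smul, Module.End.one_apply]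
    | succ i ih =>
      rw [pow_succ', Module.End.mul_apply, ih, _root_.map_smul, heig l, smul_smul, pow_succ']
      ring_nf
  have hUpowx0 : ∀ i : ℕ, (U ^ i) x0 = ∑ l, (c l * lam l ^ i) • v l := by
    intro i
    rw [hx0, map_sum]
    refine Finset.sum_congr rfl fun l _ => ?_
    rw [_root_.map_smul, hUpowv, smul_smul]
  have hpow : ∀ (i : ℕ) (hi : i < m + 1), wW ⟨i, hi⟩ = (U ^ i) x0 := by
    intro i
    induction i with
    | zero => intro hi; rw [pow_zero, Module.End.one_apply]
    | succ i ih =>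
      intro hi
      have hi' : i < m + 1 := by omega
      have him : i < m := by omega
      have hstep : U (wW ⟨i, hi'⟩) = wW ⟨i + 1, hi⟩ := by
        have h := hUw ⟨i, him⟩
        have e1 : (⟨i, him⟩ : Fin m).castSucc = (⟨i, hi'⟩ : Fin (m + 1)) := rfl
        have e2 : (⟨i, him⟩ : Fin m).succ = (⟨i + 1, hi⟩ : Fin (m + 1)) := rfl
        rw [e1, e2] at h
        exact h
      rw [← hstep, ih hi', pow_succ', Module.End.mul_apply]
  refine ⟨fun l => (starRingEnd ℂ) (lam l), fun l => Complex.normSq (c l), ?_, ?_, ?_⟩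
  · intro l
    rw [Complex.norm_conj]
    exact hlam1 l
  · intro l
    exact Complex.normSq_nonneg _
  · intro j k
    have hj : j = ⟨(j : ℕ), j.2⟩ := rfl
    have hk : k = ⟨(k : ℕ), k.2⟩ := rfl
    rw [← hinnerW j k, hj, hk, hpow (j : ℕ) j.2, hpow (k : ℕ) k.2, hUpowx0, hUpowx0,
      hon.inner_sum]
    refine Finset.sum_congr rfl fun l _ => ?_
    rw [_root_.map_mul, _root_.map_pow]
    have hnsq : ((Complex.normSq (c l) : ℝ) : ℂ) = (starRingEnd ℂ) (c l) * c l := by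
      rw [← Complex.mul_conj]
      ring
    rw [hnsq]
    simp only [RingHomCompTriple.comp_apply, RingHom.id_apply, Complex.conj_conj]
    ring

open scoped MatrixOrder in
set_option maxHeartbeats 800000 in
lemma toeplitz_decomp (m r : ℕ) (P : Matrix (Fin (m + 1)) (Fin (m + 1)) ℂ)
    (hToep : ∀ j k j' k' : Fin (m + 1), (j : ℤ) - (k : ℤ) = (j' : ℤ) - (k' : ℤ) → P j k = P j' k')
    (hPSD : P.PosSemidef) (hrank : P.rank = r) :
    ∃ (μ : Fin r → ℂ) (d : Fin r → ℝ),
      (∀ l, ‖μ l‖ = 1) ∧ (∀ l, 0 ≤ d l) ∧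
      ∀ j k : Fin (m + 1),
        P j k = ∑ l, (d l : ℂ) * μ l ^ (j : ℕ) * (starRingEnd ℂ) (μ l) ^ (k : ℕ) := by
  classical
  set C : Matrix (Fin (m + 1)) (Fin (m + 1)) ℂ := CFC.sqrt P with hCdef
  have hP0 : 0 ≤ P := Matrix.nonneg_iff_posSemidef.mpr hPSD
  have hCmul : C * C = P := CFC.sqrt_mul_sqrt_self P hP0
  have hCH : Cᴴ = C := (CFC.sqrt_nonneg P).posSemidef.1
  set eqL : (Fin (m + 1) → ℂ) ≃ₗ[ℂ] EuclideanSpace ℂ (Fin (m + 1)) :=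
    (WithLp.linearEquiv 2 ℂ (Fin (m + 1) → ℂ)).symm with heqLdef
  set w : Fin (m + 1) → EuclideanSpace ℂ (Fin (m + 1)) := fun j => eqL (Cᵀ j) with hwdef
  have hinner : ∀ j k : Fin (m + 1), ⟪w j, w k⟫ = P j k := by
    intro j k
    rw [hwdef]
    simp only [heqLdef, WithLp.coe_symm_linearEquiv]
    rw [PiLp.inner_apply]
    have h1 : ∀ l : Fin (m + 1),
        ⟪(WithLp.toLp 2 (Cᵀ j)) l,
          (WithLp.toLp 2 (Cᵀ k)) l⟫ = Cᴴ j l * C l k := by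
      intro l
      rw [PiLp.toLp_apply, PiLp.toLp_apply, RCLike.inner_apply,
        Matrix.conjTranspose_apply, Matrix.transpose_apply, Matrix.transpose_apply,
        starRingEnd_apply, mul_comm]
    rw [Finset.sum_congr rfl fun l _ => h1 l, ← Matrix.mul_apply, hCH, hCmul]
  have hshift : ∀ j k : Fin m, ⟪w j.castSucc, w k.castSucc⟫ = ⟪w j.succ, w k.succ⟫ := by
    intro j k
    rw [hinner, hinner]
    apply hToep
    simp only [Fin.coe_castSucc, Fin.val_succ]
    push_cast
    ring
  have hr : Module.finrank ℂ (Submodule.span ℂ (Set.range w)) = r := by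
    have h0 : Cᴴ * C = P := by rw [hCH]; exact hCmul
    have h1 : P.rank = C.rank := by
      rw [← h0]
      exact Matrix.rank_conjTranspose_mul_self C
    have h2 : C.rank = Module.finrank ℂ (Submodule.span ℂ (Set.range Cᵀ)) := by
      rw [Matrix.rank, Matrix.range_mulVecLin]
      rfl
    have h3 : Submodule.span ℂ (Set.range w)
        = Submodule.map (eqL : (Fin (m + 1) → ℂ) →ₗ[ℂ] EuclideanSpace ℂ (Fin (m + 1)))
          (Submodule.span ℂ (Set.range Cᵀ)) := by
      rw [Submodule.map_span]
      congr 1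
      exact Set.range_comp _ _
    have h4 : Module.finrank ℂ (Submodule.map
        (eqL : (Fin (m + 1) → ℂ) →ₗ[ℂ] EuclideanSpace ℂ (Fin (m + 1)))
        (Submodule.span ℂ (Set.range Cᵀ)))
        = Module.finrank ℂ (Submodule.span ℂ (Set.range Cᵀ)) :=
      LinearEquiv.finrank_map_eq eqL _
    rw [h3, h4, ← h2, ← h1, hrank]
  obtain ⟨μ, d, h1, h2, h3⟩ := span_decomp m r _ w hshift hr
  exact ⟨μ, d, h1, h2, fun j k => by rw [← hinner j k]; exact h3 j k⟩

/-- Caratheodory–Toeplitz: every PSD Toeplitz matrix `P` of rank `r` admits a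
Vandermonde decomposition `P = V D V*` with distinct frequencies and positive weights. -/
theorem caratheodory_toeplitz (n r : ℕ) (P : Matrix (Fin n) (Fin n) ℂ)
    (hToep : ∀ j k j' k' : Fin n, (j : ℤ) - (k : ℤ) = (j' : ℤ) - (k' : ℤ) → P j k = P j' k')
    (hPSD : P.PosSemidef) (hrank : P.rank = r) :
    ∃ (f : Fin r → ℝ) (d : Fin r → ℝ),
      Function.Injective f ∧ (∀ l, f l ∈ Set.Ico (0 : ℝ) 1) ∧ (∀ l, 0 < d l) ∧
      ∀ j k : Fin n, P j k = ∑ l, (d l : ℂ) * atomVec n (f l) j * star (atomVec n (f l) k) := by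
  classical
  rcases Nat.eq_zero_or_pos n with hn | hn
  · subst hn
    have hr0 : r = 0 := by
      have h1 := Matrix.rank_le_card_width P
      simp at h1
      omega
    subst hr0
    exact ⟨Fin.elim0, Fin.elim0, fun a => a.elim0, fun l => l.elim0, fun l => l.elim0,
      fun j => j.elim0⟩
  obtain ⟨m, rfl⟩ : ∃ m, n = m + 1 := ⟨n - 1, by omega⟩
  obtain ⟨μ, dl, hμ1, hdl0, hsum⟩ := toeplitz_decomp m r P hToep hPSD hrank
  -- frequencies
  set freq : Fin r → ℝ := fun l => Int.fract (Complex.arg (μ l) / (2 * Real.pi)) with hfreqdef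
  have hfreqIco : ∀ l, freq l ∈ Set.Ico (0 : ℝ) 1 :=
    fun l => ⟨Int.fract_nonneg _, Int.fract_lt_one _⟩
  have hexpfreq : ∀ l, Complex.exp (Complex.I * (2 * Real.pi * freq l)) = μ l := by
    intro l
    have habs : Complex.exp (Complex.arg (μ l) * Complex.I) = μ l := by
      have h := Complex.norm_mul_exp_arg_mul_I (μ l)
      rw [hμ1 l] at h
      simpa using h
    rw [hfreqdef]
    simp only [Int.fract]
    set θ := Complex.arg (μ l)
    have hpi : (Real.pi : ℝ) ≠ 0 := Real.pi_ne_zero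
    have hpic : (2 * (Real.pi : ℂ)) ≠ 0 := by
      simp only [ne_eq, mul_eq_zero]
      push_neg
      exact ⟨two_ne_zero, by exact_mod_cast hpi⟩
    have hexpand : Complex.I * (2 * (Real.pi : ℂ)
          * ((θ : ℂ) / (2 * (Real.pi : ℂ)) - ((⌊θ / (2 * Real.pi)⌋ : ℤ) : ℂ)))
        = (θ : ℂ) * Complex.I - ((⌊θ / (2 * Real.pi)⌋ : ℤ) : ℂ)
            * (2 * (Real.pi : ℂ) * Complex.I) := by
      field_simp
    push_cast
    rw [hexpand, Complex.exp_sub]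
    have h1 : Complex.exp (↑⌊θ / (2 * Real.pi)⌋ * (2 * Real.pi * Complex.I)) = 1 := by
      exact_mod_cast Complex.exp_int_mul_two_pi_mul_I ⌊θ / (2 * Real.pi)⌋
    rw [h1, div_one, habs]
  have hatom : ∀ (l : Fin r) (j : Fin (m + 1)), atomVec (m + 1) (freq l) j = μ l ^ (j : ℕ) := by
    intro l j
    rw [atomVec, ← hexpfreq l, ← Complex.exp_nat_mul]
    congr 1
    push_cast
    ring
  -- grouping by frequency
  set Dw : ℝ → ℝ := fun t => ∑ l ∈ Finset.univ.filter (fun l => freq l = t), dl l with hDwdef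
  have hDwnonneg : ∀ t, 0 ≤ Dw t := fun t => Finset.sum_nonneg fun l _ => hdl0 l
  set F : Finset ℝ := (Finset.univ.image freq).filter (fun t => 0 < Dw t) with hFdef
  have hFIco : ∀ t ∈ F, t ∈ Set.Ico (0 : ℝ) 1 := by
    intro t ht
    rw [hFdef, Finset.mem_filter, Finset.mem_image] at ht
    obtain ⟨⟨l, _, rfl⟩, _⟩ := ht
    exact hfreqIco l
  have hfreqeq : ∀ (l l' : Fin r), freq l = freq l' → μ l = μ l' := by
    intro l l' h
    rw [← hexpfreq l, ← hexpfreq l', h]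
  have hsumF : ∀ j k : Fin (m + 1),
      P j k = ∑ t ∈ F, (Dw t : ℂ) * atomVec (m + 1) t j * star (atomVec (m + 1) t k) := by
    intro j k
    rw [hsum j k]
    have h1 : ∀ l : Fin r, (dl l : ℂ) * μ l ^ (j : ℕ) * (starRingEnd ℂ) (μ l) ^ (k : ℕ)
        = (dl l : ℂ) * (atomVec (m + 1) (freq l) j * star (atomVec (m + 1) (freq l) k)) := by
      intro l
      rw [hatom, hatom]
      simp only [star_pow, RCLike.star_def]
      ring
    rw [Finset.sum_congr rfl fun l _ => h1 l]
    rw [← Finset.sum_fiberwise_of_maps_to (g := freq) (t := Finset.univ.image freq)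
      (fun l _ => Finset.mem_image_of_mem freq (Finset.mem_univ l))]
    rw [← Finset.sum_subset (Finset.filter_subset (fun t => 0 < Dw t) (Finset.univ.image freq))]
    · refine Finset.sum_congr rfl fun t ht => ?_
      have h2 : ∀ l ∈ Finset.univ.filter (fun l => freq l = t),
          (dl l : ℂ) * (atomVec (m + 1) (freq l) j * star (atomVec (m + 1) (freq l) k))
          = (dl l : ℂ) * (atomVec (m + 1) t j * star (atomVec (m + 1) t k)) := by
        intro l hl
        rw [Finset.mem_filter] at hl
        rw [hl.2]
      rw [Finset.sum_congr rfl h2, ← Finset.sum_mul]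
      have h3 : (∑ l ∈ Finset.univ.filter (fun l => freq l = t), (dl l : ℂ)) = (Dw t : ℂ) := by
        rw [hDwdef]
        push_cast
        rfl
      rw [h3]
      ring
    · intro t htimg htF
      rw [Finset.mem_filter] at htF
      have hDw0 : Dw t = 0 := by
        rcases lt_or_eq_of_le (hDwnonneg t) with h | h
        · exact absurd ⟨htimg, h⟩ htF
        · exact h.symm
      have h4 : ∀ l ∈ Finset.univ.filter (fun l => freq l = t),
          (dl l : ℂ) * (atomVec (m + 1) (freq l) j * star (atomVec (m + 1) (freq l) k)) = 0 := by
        intro l hl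
        rw [Finset.mem_filter] at hl
        have hdl00 : dl l = 0 := by
          have hle : dl l ≤ Dw t := by
            rw [hDwdef]
            refine Finset.single_le_sum (fun i _ => hdl0 i) ?_
            rw [Finset.mem_filter]
            exact ⟨Finset.mem_univ l, hl.2⟩
          linarith [hdl0 l]
        rw [hdl00]
        simp
      rw [Finset.sum_congr rfl h4]
      simp
  -- cardinality of F equals r
  have hcardle : F.card ≤ r := by
    calc F.card ≤ (Finset.univ.image freq).card :=
          Finset.card_le_card (Finset.filter_subset _ _)
    _ ≤ (Finset.univ : Finset (Fin r)).card := Finset.card_image_le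
    _ = r := by simp
  have hcardge : r ≤ F.card := by
    set Amat : Matrix (Fin (m + 1)) {t // t ∈ F} ℂ :=
      fun j t => (Real.sqrt (Dw t) : ℂ) * atomVec (m + 1) t j with hAmatdef
    have hPA : P = Amat * Amatᴴ := by
      ext j k
      rw [Matrix.mul_apply, hsumF j k, ← Finset.sum_coe_sort]
      refine Finset.sum_congr rfl fun t _ => ?_
      rw [Matrix.conjTranspose_apply, hAmatdef]
      have ht : (0:ℝ) ≤ Dw t := hDwnonneg t
      have hsq : (Real.sqrt (Dw t) : ℂ) * (Real.sqrt (Dw t) : ℂ) = (Dw t : ℂ) := by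
        rw [← Complex.ofReal_mul, Real.mul_self_sqrt ht]
      simp only [star_mul', RCLike.star_def, Complex.conj_ofReal]
      rw [← hsq]
      ring
    have h1 : P.rank ≤ Amat.rank := by
      rw [hPA]
      exact Matrix.rank_mul_le_left Amat Amatᴴ
    have h2 : Amat.rank ≤ Fintype.card {t // t ∈ F} := Matrix.rank_le_card_width Amat
    rw [Fintype.card_coe] at h2
    omega
  have hcard : F.card = r := le_antisymm hcardle hcardge
  set e : {t // t ∈ F} ≃ Fin r := Fintype.equivFinOfCardEq (by rw [Fintype.card_coe]; exact hcard)
    with hedef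
  refine ⟨fun i => ((e.symm i : {t // t ∈ F}) : ℝ), fun i => Dw ((e.symm i : {t // t ∈ F}) : ℝ),
    ?_, ?_, ?_, ?_⟩
  · intro a b hab
    have h5 : (e.symm a : {t // t ∈ F}) = (e.symm b : {t // t ∈ F}) := Subtype.ext hab
    exact e.symm.injective h5
  · intro l
    exact hFIco _ (e.symm l).2
  · intro l
    exact (Finset.mem_filter.mp ((e.symm l).2)).2
  · intro j k
    rw [hsumF j k, ← Finset.sum_coe_sort]
    exact (Equiv.sum_comp e.symm
      (fun t : {t // t ∈ F} =>
        (Dw (t : ℝ) : ℂ) * atomVec (m + 1) (t : ℝ) j * star (atomVec (m + 1) (t : ℝ) k))).symm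
end

section
/- Suppose x ∈ ℂⁿ, u ∈ ℂⁿ, and t ∈ ℝ satisfy that the (n+1)×(n+1) block matrix [[Toep(u), x],[x*, t]] is positive semidefinite, where Toep(u) has rank r < n and Vandermonde decomposition Toep(u) = VDV*. Then x lies in the range of V; i.e., x can be written as a linear combination of at most r atoms a(f_k). -/
open Complex Matrix
open scoped ComplexOrder

/-- The Hermitian Toeplitz matrix with first column `u`. -/
noncomputable def Toep (n : ℕ) (u : Fin n → ℂ) : Matrix (Fin n) (Fin n) ℂ :=
  fun j k =>
    if (k : ℕ) ≤ (j : ℕ) then u ⟨(j : ℕ) - k, Nat.lt_of_le_of_lt (Nat.sub_le _ _) j.isLt⟩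
    else star (u ⟨(k : ℕ) - j, Nat.lt_of_le_of_lt (Nat.sub_le _ _) k.isLt⟩)

/-- The block matrix `[[Toep(u), x], [x*, t]]`. -/
noncomputable def blockMat (n : ℕ) (u x : Fin n → ℂ) (t : ℝ) :
    Matrix (Fin n ⊕ Fin 1) (Fin n ⊕ Fin 1) ℂ :=
  Matrix.fromBlocks (Toep n u) (fun j _ => x j) (fun _ k => star (x k)) (fun _ _ => (t : ℂ))

/-- If the block matrix `[[Toep(u), x],[x*, t]]` is PSD and `Toep(u) = VDV*` is a Vandermonde
decomposition of rank `r < n`, then `x` lies in the range of `V`. -/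
theorem range_of_block_psd (n r : ℕ) (hr : r < n) (u x : Fin n → ℂ) (t : ℝ)
    (f : Fin r → ℝ) (d : Fin r → ℝ)
    (hf : Function.Injective f) (hf' : ∀ l, f l ∈ Set.Ico (0 : ℝ) 1) (hd : ∀ l, 0 < d l)
    (hrank : (Toep n u).rank = r)
    (hdecomp : ∀ j k : Fin n,
      Toep n u j k = ∑ l, (d l : ℂ) * atomVec n (f l) j * star (atomVec n (f l) k))
    (hPSD : (blockMat n u x t).PosSemidef) :
    ∃ w : Fin r → ℂ, ∀ j : Fin n, x j = ∑ l, w l * atomVec n (f l) j := by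
  classical
  set v : Fin r → EuclideanSpace ℂ (Fin n) := fun l => WithLp.toLp 2 (fun j => atomVec n (f l) j) with hv
  set S : Submodule ℂ (EuclideanSpace ℂ (Fin n)) := Submodule.span ℂ (Set.range v) with hS
  obtain ⟨p, hp, q, hq, hxpq⟩ :=
    S.exists_add_mem_mem_orthogonal (WithLp.toLp 2 x)
  -- q is orthogonal to each column
  have hVq : ∀ l : Fin r, ∑ k, star (atomVec n (f l) k) * q k = 0 := by
    intro l
    have h := (Submodule.mem_orthogonal S q).mp hq (v l) (Submodule.subset_span ⟨l, rfl⟩)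
    simpa [PiLp.inner_apply, RCLike.inner_apply, mul_comm, hv] using h
  -- Toep(u) * q = 0
  have hAq : ∀ j : Fin n, ∑ k, Toep n u j k * q k = 0 := by
    intro j
    calc ∑ k, Toep n u j k * q k
        = ∑ k, ∑ l, (d l : ℂ) * atomVec n (f l) j * star (atomVec n (f l) k) * q k := by
          refine Finset.sum_congr rfl fun k _ => ?_
          rw [hdecomp j k, Finset.sum_mul]
      _ = ∑ l, (d l : ℂ) * atomVec n (f l) j * ∑ k, star (atomVec n (f l) k) * q k := by
          rw [Finset.sum_comm]
          refine Finset.sum_congr rfl fun l _ => ?_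
          rw [Finset.mul_sum]
          exact Finset.sum_congr rfl fun k _ => by ring
      _ = 0 := by
          refine Finset.sum_eq_zero fun l _ => ?_
          rw [hVq l, mul_zero]
  set c : ℝ := ∑ j, Complex.normSq (q j) with hcdef
  have hqq : ∑ j, star (q j) * q j = (c : ℂ) := by
    rw [hcdef]
    push_cast
    exact Finset.sum_congr rfl fun j _ => by
      rw [Complex.star_def, ← Complex.normSq_eq_conj_mul_self]
  have hpq : (inner ℂ p q : ℂ) = 0 := (Submodule.mem_orthogonal S q).mp hq p hp
  have hqp : (inner ℂ q p : ℂ) = 0 := by rw [← inner_conj_symm, hpq, map_zero]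
  have hinnerqq : (inner ℂ q q : ℂ) = ∑ j, star (q j) * q j := by
    rw [PiLp.inner_apply]
    simp only [RCLike.inner_apply, Complex.star_def, mul_comm]
  have hqx : ∑ j, star (q j) * x j = (c : ℂ) := by
    have h : (inner ℂ q (WithLp.toLp 2 x) : ℂ) = (c : ℂ) := by
      rw [hxpq, inner_add_right, hqp, zero_add, hinnerqq, hqq]
    simpa [PiLp.inner_apply, RCLike.inner_apply, mul_comm] using h
  have hxq : ∑ j, star (x j) * q j = (c : ℂ) := by
    have h2 := congrArg star hqx
    simpa [star_sum, star_mul', mul_comm] using h2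
  -- quadratic form computation
  have key : ∀ s : ℝ, 0 ≤ t - 2 * s * c := by
    intro s
    set y : Fin n ⊕ Fin 1 → ℂ :=
      Sum.elim (fun j => (-(s:ℂ)) * q j) (fun _ : Fin 1 => (1:ℂ)) with hy
    have h := hPSD.dotProduct_mulVec_nonneg y
    have hA0 : ∀ j : Fin n, ∑ k, Toep n u j k * ((-(s:ℂ)) * q k) = 0 := by
      intro j
      rw [show ∑ k, Toep n u j k * ((-(s:ℂ)) * q k)
          = ∑ k, (-(s:ℂ)) * (Toep n u j k * q k) from
          Finset.sum_congr rfl fun k _ => by ring, ← Finset.mul_sum, hAq j, mul_zero]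
    have hMy : blockMat n u x t *ᵥ y =
        Sum.elim (fun j => x j) (fun _ : Fin 1 => (-(s:ℂ)) * c + t) := by
      funext i
      cases i with
      | inl j =>
        show (blockMat n u x t (Sum.inl j)) ⬝ᵥ y = x j
        simp only [dotProduct, Fintype.sum_sum_type, blockMat, Matrix.fromBlocks, Matrix.of_apply,
          Matrix.fromBlocks_apply₁₁, Matrix.fromBlocks_apply₁₂, hy,
          Sum.elim_inl, Sum.elim_inr, Fin.sum_univ_one, mul_one]
        rw [hA0 j, zero_add]
      | inr i =>
        show (blockMat n u x t (Sum.inr i)) ⬝ᵥ y = (-(s:ℂ)) * c + t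
        simp only [dotProduct, Fintype.sum_sum_type, blockMat, Matrix.fromBlocks, Matrix.of_apply,
          Matrix.fromBlocks_apply₂₁, Matrix.fromBlocks_apply₂₂, hy,
          Sum.elim_inl, Sum.elim_inr, Fin.sum_univ_one, mul_one]
        rw [show ∑ k, star (x k) * ((-(s:ℂ)) * q k)
            = ∑ k, (-(s:ℂ)) * (star (x k) * q k) from
            Finset.sum_congr rfl fun k _ => by ring, ← Finset.mul_sum, hxq]
    have hval : star y ⬝ᵥ (blockMat n u x t *ᵥ y) = ((t - 2 * s * c : ℝ) : ℂ) := by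
      rw [hMy]
      simp only [dotProduct, Fintype.sum_sum_type, hy, Pi.star_apply,
        Sum.elim_inl, Sum.elim_inr, Fin.sum_univ_one, star_one, one_mul]
      rw [show ∑ j, star ((-(s:ℂ)) * q j) * x j
          = ∑ j, (-(s:ℂ)) * (star (q j) * x j) from
          Finset.sum_congr rfl fun j _ => by
            rw [star_mul', star_neg]
            simp only [Complex.star_def, Complex.conj_ofReal]
            ring,
        ← Finset.mul_sum, hqx]
      push_cast
      ring
    rw [hval] at h
    exact_mod_cast h
  have hc0 : 0 ≤ c := Finset.sum_nonneg fun j _ => Complex.normSq_nonneg _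
  have hc : c = 0 := by
    by_contra hne
    have hcp : 0 < c := lt_of_le_of_ne hc0 (Ne.symm hne)
    have h := key ((t + 1) / (2 * c))
    have h2 : 2 * ((t + 1) / (2 * c)) * c = t + 1 := by
      field_simp
    rw [h2] at h
    linarith
  have hq0 : q = 0 := by
    ext j
    have h := (Finset.sum_eq_zero_iff_of_nonneg
      (fun j _ => Complex.normSq_nonneg (q j))).mp hc j (Finset.mem_univ j)
    exact Complex.normSq_eq_zero.mp h
  have hxS : (WithLp.toLp 2 x) ∈ S := by
    rw [hxpq, hq0, add_zero]; exact hp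
  obtain ⟨w, hw⟩ := (Submodule.mem_span_range_iff_exists_fun ℂ).mp hxS
  refine ⟨w, fun j => ?_⟩
  have h := congrArg (fun z : EuclideanSpace ℂ (Fin n) => z j) hw
  calc x j = (∑ l, w l • v l) j := h.symm
    _ = ∑ l, w l * atomVec n (f l) j := by
      rw [show (∑ l, w l • v l) j = ∑ l, (w l • v l) j from by rw [WithLp.ofLp_sum, Finset.sum_apply]]
      rfl
end

section
/- If VDV* ⪰ t^{-1}Vww*V* where V ∈ ℂ^{n×r} is full column rank, D is diagonal positive, t > 0, and w ∈ ℂ^r, then trace(D)·t ≥ (∑_k |w_k|)². -/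
open Complex Matrix
open scoped ComplexOrder

lemma vecMulVec_mulVec' {m k : Type*} [Fintype k] (u : m → ℂ) (v : k → ℂ) (z : k → ℂ) :
    Matrix.vecMulVec u v *ᵥ z = (v ⬝ᵥ z) • u := by
  funext i
  simp [Matrix.vecMulVec, Matrix.mulVec, dotProduct, Finset.sum_mul, Finset.mul_sum,
    mul_comm, mul_assoc, mul_left_comm]

lemma conj_unit_mul {z : ℂ} (h : z ≠ 0) : (starRingEnd ℂ) (z / ‖z‖) * z = (‖z‖ : ℂ) := by
  have hn : (‖z‖ : ℂ) ≠ 0 := by simpa using norm_ne_zero_iff.mpr h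
  rw [map_div₀, Complex.conj_ofReal, div_mul_eq_mul_div, mul_comm, Complex.mul_conj', sq,
    mul_div_assoc, div_self hn, mul_one]

/-- If `VDV* ⪰ t⁻¹ V w w* V*` with `V` full column rank, `D` diagonal positive and `t > 0`,
then `trace(D)·t ≥ (∑_k |w_k|)²`. -/
theorem trace_mul_t_ge_sq (n r : ℕ) (V : Matrix (Fin n) (Fin r) ℂ)
    (hV : V.rank = r) (d : Fin r → ℝ) (hd : ∀ l, 0 < d l) (t : ℝ) (ht : 0 < t)
    (w : Fin r → ℂ)
    (hLoewner : (V * Matrix.diagonal (fun l => (d l : ℂ)) * Vᴴ -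
      (t⁻¹ : ℂ) • Matrix.vecMulVec (V.mulVec w) (star (V.mulVec w))).PosSemidef) :
    (∑ l, ‖w l‖) ^ 2 ≤ (∑ l, d l) * t := by
  classical
  set x : Fin r → ℂ := fun k => if w k = 0 then 0 else w k / ‖w k‖ with hxdef
  obtain ⟨z, hz⟩ : ∃ z, Vᴴ.mulVec z = x := by
    have h1 : Vᴴ.rank = r := by rw [Matrix.rank_conjTranspose, hV]
    have h2 : LinearMap.range Vᴴ.mulVecLin = ⊤ := by
      apply Submodule.eq_top_of_finrank_eq
      rw [← Matrix.rank, h1]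
      simp [Module.finrank_fintype_fun_eq_card]
    obtain ⟨z, hz⟩ := h2 ▸ Submodule.mem_top (x := x) (R := ℂ)
    exact ⟨z, hz⟩
  have h0 := hLoewner.dotProduct_mulVec_nonneg z
  set a := V.mulVec w with ha
  set S : ℝ := ∑ l, ‖w l‖ with hS
  set s : ℝ := ∑ k, if w k = 0 then 0 else d k with hs
  have hstarzV : star z ᵥ* V = star x := by
    rw [← hz, Matrix.star_mulVec, Matrix.conjTranspose_conjTranspose]
  -- conj x k * x k
  have hxx : ∀ k, (starRingEnd ℂ) (x k) * x k = if w k = 0 then 0 else 1 := by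
    intro k
    by_cases h : w k = 0
    · simp [hxdef, h]
    · have hn : (‖w k‖ : ℂ) ≠ 0 := by simpa using norm_ne_zero_iff.mpr h
      simp only [hxdef, h, if_false]
      rw [map_div₀, Complex.conj_ofReal, div_mul_div_comm, mul_comm, Complex.mul_conj',
        sq, div_self (mul_ne_zero hn hn)]
  -- conj x k * w k
  have hxw : star x ⬝ᵥ w = (S : ℂ) := by
    simp only [dotProduct, hS, Complex.ofReal_sum, Pi.star_apply]
    refine Finset.sum_congr rfl fun k _ => ?_
    by_cases h : w k = 0
    · simp [hxdef, h]
    · simp only [hxdef, h, if_false, RCLike.star_def]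
      exact conj_unit_mul h
  have hwx : star w ⬝ᵥ x = (S : ℂ) := by
    have := congrArg (starRingEnd ℂ) hxw
    rw [Complex.conj_ofReal] at this
    rw [← this]
    simp [dotProduct, map_sum, mul_comm]
  -- term 1
  have hterm1 : star z ⬝ᵥ (V * Matrix.diagonal (fun l => (d l : ℂ)) * Vᴴ) *ᵥ z = (s : ℂ) := by
    rw [← Matrix.mulVec_mulVec, ← Matrix.mulVec_mulVec, hz, Matrix.dotProduct_mulVec _ V,
      hstarzV]
    simp only [dotProduct, Pi.star_apply, Matrix.mulVec_diagonal, hs, Complex.ofReal_sum]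
    refine Finset.sum_congr rfl fun k _ => ?_
    rw [mul_comm ((d k : ℂ)) (x k), ← mul_assoc, RCLike.star_def, hxx k]
    by_cases h : w k = 0 <;> simp [h]
  -- term 2
  have hterm2 : star z ⬝ᵥ ((t⁻¹ : ℂ) • Matrix.vecMulVec a (star a)) *ᵥ z
      = ((t : ℂ))⁻¹ * (S : ℂ) * (S : ℂ) := by
    rw [Matrix.smul_mulVec, dotProduct_smul, vecMulVec_mulVec', dotProduct_smul]
    have h1 : star a ⬝ᵥ z = (S : ℂ) := by
      rw [ha, Matrix.star_mulVec, ← Matrix.dotProduct_mulVec, hz, hwx]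
    have h2 : star z ⬝ᵥ a = (S : ℂ) := by
      rw [ha, Matrix.dotProduct_mulVec, hstarzV, hxw]
    rw [h1, h2, smul_eq_mul, smul_eq_mul]
    ring
  rw [Matrix.sub_mulVec, dotProduct_sub, hterm1, hterm2] at h0
  have hreal : (0 : ℝ) ≤ s - t⁻¹ * S * S := by
    have hcast : ((s - t⁻¹ * S * S : ℝ) : ℂ) = (s : ℂ) - ((t : ℂ))⁻¹ * S * S := by
      push_cast; ring
    rw [← Complex.zero_le_real, hcast]
    exact h0
  have hsle : s ≤ ∑ l, d l := by
    apply Finset.sum_le_sum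
    intro k _
    by_cases h : w k = 0 <;> simp [h, (hd k).le]
  have : S * S ≤ s * t := by
    have h1 : t⁻¹ * S * S ≤ s := by linarith
    calc S * S = (t⁻¹ * S * S) * t := by field_simp
    _ ≤ s * t := by nlinarith
  calc S ^ 2 = S * S := sq S
  _ ≤ s * t := this
  _ ≤ (∑ l, d l) * t := by nlinarith
end

section
/- Suppose Q : [0,1] → ℂ is twice continuously differentiable, Q_R = Re Q, Q_I = Im Q, and on an interval I around f_k one has Q_R ≥ 0.9, |Q_I| ≤ 0.04, Q_R'' ≤ −0.3·κ, |Q_I''| ≤ 0.6·κ, |Q'| ≤ 0.44·√κ for some κ > 0, and furthermore Q_R Q_R'' + |Q'|² + |Q_I||Q_I''| < 0 on I. If |Q(f_k)| = 1 and Q'(f_k) = 0, then |Q(f)| < 1 for all f ∈ I with f ≠ f_k. -/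
open Complex

/-- Local maximum principle for the dual polynomial near a frequency: under the stated
bounds on `Q` and its derivatives on an interval `I` around `f_k`, with `|Q(f_k)| = 1` and
`Q'(f_k) = 0`, we have `|Q(f)| < 1` on `I` away from `f_k`. -/
theorem modulus_lt_one_near_peak (Q : ℝ → ℂ) (hQ : ContDiff ℝ 2 Q)
    (a b fk : ℝ) (hfk : fk ∈ Set.Ioo a b) (κ : ℝ) (hκ : 0 < κ)
    (QR QI : ℝ → ℝ) (hQR : QR = fun f => (Q f).re) (hQI : QI = fun f => (Q f).im)
    (hne : ∀ f ∈ Set.Icc a b, Q f ≠ 0)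
    (h1 : ∀ f ∈ Set.Icc a b, 0.9 ≤ QR f)
    (h2 : ∀ f ∈ Set.Icc a b, |QI f| ≤ 0.04)
    (h3 : ∀ f ∈ Set.Icc a b, iteratedDeriv 2 QR f ≤ -0.3 * κ)
    (h4 : ∀ f ∈ Set.Icc a b, |iteratedDeriv 2 QI f| ≤ 0.6 * κ)
    (h5 : ∀ f ∈ Set.Icc a b, ‖deriv Q f‖ ≤ 0.44 * Real.sqrt κ)
    (h6 : ∀ f ∈ Set.Icc a b,
      QR f * iteratedDeriv 2 QR f + ‖deriv Q f‖ ^ 2 + |QI f| * |iteratedDeriv 2 QI f| < 0)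
    (hpeak : ‖Q fk‖ = 1) (hderiv : deriv Q fk = 0) :
    ∀ f ∈ Set.Icc a b, f ≠ fk → ‖Q f‖ < 1 := by
  subst hQR hQI
  have hQd : Differentiable ℝ Q := hQ.differentiable (by norm_num)
  have hQ'cd : ContDiff ℝ 1 (deriv Q) := by
    have h2' : ContDiff ℝ ((1 : ℕ) + 1) Q := by exact_mod_cast hQ
    exact (contDiff_succ_iff_deriv.mp h2').2.2
  have hQ'd : Differentiable ℝ (deriv Q) := hQ'cd.differentiable one_ne_zero
  set g : ℝ → ℝ := fun f => (Q f).re ^ 2 + (Q f).im ^ 2 with hg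
  set g1 : ℝ → ℝ :=
    fun f => 2 * ((Q f).re * (deriv Q f).re + (Q f).im * (deriv Q f).im) with hg1
  set g2 : ℝ → ℝ := fun x => 2 * ((deriv Q x).re ^ 2 + (Q x).re * (deriv (deriv Q) x).re
      + (deriv Q x).im ^ 2 + (Q x).im * (deriv (deriv Q) x).im) with hg2
  have hre : ∀ x, HasDerivAt (fun f => (Q f).re) ((deriv Q x).re) x := fun x =>
    Complex.reCLM.hasFDerivAt.comp_hasDerivAt x (hQd x).hasDerivAt
  have him : ∀ x, HasDerivAt (fun f => (Q f).im) ((deriv Q x).im) x := fun x =>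
    Complex.imCLM.hasFDerivAt.comp_hasDerivAt x (hQd x).hasDerivAt
  have hre1 : ∀ x, HasDerivAt (fun f => (deriv Q f).re) ((deriv (deriv Q) x).re) x := fun x =>
    Complex.reCLM.hasFDerivAt.comp_hasDerivAt x (hQ'd x).hasDerivAt
  have him1 : ∀ x, HasDerivAt (fun f => (deriv Q f).im) ((deriv (deriv Q) x).im) x := fun x =>
    Complex.imCLM.hasFDerivAt.comp_hasDerivAt x (hQ'd x).hasDerivAt
  have hgder : ∀ x, HasDerivAt g (g1 x) x := by
    intro x
    have := ((hre x).pow 2).add ((him x).pow 2)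
    refine this.congr_deriv ?_
    push_cast
    ring
  have hg1der : ∀ x, HasDerivAt g1 (g2 x) x := by
    intro x
    have := (((hre x).mul (hre1 x)).add ((him x).mul (him1 x))).const_mul 2
    refine this.congr_deriv ?_
    ring
  -- identify iterated derivatives
  have hderre : deriv (fun f => (Q f).re) = fun x => (deriv Q x).re :=
    funext fun x => (hre x).deriv
  have hderim : deriv (fun f => (Q f).im) = fun x => (deriv Q x).im :=
    funext fun x => (him x).deriv
  have hit2re : ∀ x, iteratedDeriv 2 (fun f => (Q f).re) x = (deriv (deriv Q) x).re := by
    intro x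
    rw [show (2 : ℕ) = 1 + 1 from rfl, iteratedDeriv_succ, iteratedDeriv_one, hderre]
    exact (hre1 x).deriv
  have hit2im : ∀ x, iteratedDeriv 2 (fun f => (Q f).im) x = (deriv (deriv Q) x).im := by
    intro x
    rw [show (2 : ℕ) = 1 + 1 from rfl, iteratedDeriv_succ, iteratedDeriv_one, hderim]
    exact (him1 x).deriv
  have hnorm : ∀ z : ℂ, ‖z‖ ^ 2 = z.re ^ 2 + z.im ^ 2 := by
    intro z
    rw [Complex.sq_norm, Complex.normSq_apply]
    ring
  -- g2 < 0 on [a,b]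
  have hg2neg : ∀ x ∈ Set.Icc a b, g2 x < 0 := by
    intro x hx
    have h6' := h6 x hx
    rw [hnorm, hit2re x, hit2im x] at h6'
    have habs : (Q x).im * (deriv (deriv Q) x).im ≤
        |(Q x).im| * |(deriv (deriv Q) x).im| := by
      rw [← abs_mul]; exact le_abs_self _
    simp only [hg2]
    nlinarith
  -- g1 is strictly antitone on [a,b]
  have hg1cont : Continuous g1 := by
    have : Differentiable ℝ g1 := fun x => (hg1der x).differentiableAt
    exact this.continuous
  have hanti : StrictAntiOn g1 (Set.Icc a b) := by
    apply strictAntiOn_of_deriv_neg (convex_Icc a b) hg1cont.continuousOn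
    intro x hx
    rw [interior_Icc] at hx
    rw [(hg1der x).deriv]
    exact hg2neg x (Set.Ioo_subset_Icc_self hx)
  have hfkmem : fk ∈ Set.Icc a b := Set.Ioo_subset_Icc_self hfk
  have hg1fk : g1 fk = 0 := by simp [hg1, hderiv]
  have hgfk : g fk = 1 := by
    have := hnorm (Q fk)
    rw [hpeak] at this
    simp only [hg]
    nlinarith
  intro f hf hfne
  have hgcont : Continuous g := by
    have : Differentiable ℝ g := fun x => (hgder x).differentiableAt
    exact this.continuous
  have key : g f < 1 := by
    rcases lt_or_gt_of_ne hfne with hlt | hgt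
    · -- f < fk
      obtain ⟨c, hc, hceq⟩ := exists_hasDerivAt_eq_slope g g1 hlt
        hgcont.continuousOn (fun x _ => hgder x)
      have hcmem : c ∈ Set.Icc a b :=
        ⟨le_trans hf.1 hc.1.le, le_trans hc.2.le hfkmem.2⟩
      have : (0 : ℝ) < g1 c := by
        have := hanti hcmem hfkmem hc.2
        rw [hg1fk] at this
        linarith
      rw [hceq, hgfk] at this
      have hd : (0 : ℝ) < fk - f := by linarith
      rcases div_pos_iff.mp this with ⟨h', _⟩ | ⟨_, h'⟩ <;> linarith
    · -- fk < f
      obtain ⟨c, hc, hceq⟩ := exists_hasDerivAt_eq_slope g g1 hgt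
        hgcont.continuousOn (fun x _ => hgder x)
      have hcmem : c ∈ Set.Icc a b :=
        ⟨le_trans hfkmem.1 hc.1.le, le_trans hc.2.le hf.2⟩
      have : g1 c < 0 := by
        have := hanti hfkmem hcmem hc.1
        rw [hg1fk] at this
        linarith
      rw [hceq, hgfk] at this
      have hd : (0 : ℝ) < f - fk := by linarith
      rcases div_neg_iff.mp this with ⟨_, h'⟩ | ⟨h', _⟩ <;> linarith
  have key' : (Q f).re ^ 2 + (Q f).im ^ 2 < 1 := key
  have hnn : (0 : ℝ) ≤ ‖Q f‖ := norm_nonneg _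
  by_contra hge
  push_neg at hge
  nlinarith [hnorm (Q f), key', hge]
end
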